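/- Let d ≥ 1, α, ε > 0, and define the step weight q(r) = -α for r ≤ ε and q(r) = αβ for r > ε, where β = γ(d/2, 4π²ε²)/Γ(d/2, 4π²ε²). Then ∫₀^∞ q(√u/(2π)) u^{d/2-1} e^{-u} du = 0, and the associated kernel frequency k̂(r) = -(2πr)^{-d} e^{4π²r²} ∫₀^{4π²r²} q(√u/(2π)) u^{d/2-1} e^{-u} du is strictly positive for all r > 0, equal to α e^{4π²r²}(2πr)^{-d} γ(d/2, 4π²r²) for r ≤ ε and αβ e^{4π²r²}(2πr)^{-d} Γ(d/2, 4π²r²) for r > ε, increasing on [0,ε], decreasing on [ε,∞), with k̂(0⁺) = 2α/d and k̂(r) → 0 as r → ∞. -/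

import Mathlib

open MeasureTheory

open Set Real

/-- The lower incomplete gamma function `γ(s,x) = ∫₀^x z^{s-1} e^{-z} dz`. -/
noncomputable def lowerGamma (s x : ℝ) : ℝ :=
  ∫ z in Set.Ioc (0:ℝ) x, z ^ (s - 1) * Real.exp (-z)

/-- The upper incomplete gamma function `Γ(s,x) = ∫_x^∞ z^{s-1} e^{-z} dz`. -/
noncomputable def upperGamma (s x : ℝ) : ℝ :=
  ∫ z in Set.Ioi x, z ^ (s - 1) * Real.exp (-z)

lemma gInt {s : ℝ} (hs : 0 < s) :
    IntegrableOn (fun z : ℝ => z ^ (s - 1) * Real.exp (-z)) (Set.Ioi 0) :=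
  (Real.GammaIntegral_convergent hs).congr_fun (fun x _ => mul_comm _ _) measurableSet_Ioi

lemma gIntIoc {s : ℝ} (hs : 0 < s) {a b : ℝ} (ha : 0 ≤ a) :
    IntegrableOn (fun z : ℝ => z ^ (s - 1) * Real.exp (-z)) (Set.Ioc a b) :=
  (gInt hs).mono_set (fun x hx => lt_of_le_of_lt ha hx.1)

lemma gIntIoi {s : ℝ} (hs : 0 < s) {a : ℝ} (ha : 0 ≤ a) :
    IntegrableOn (fun z : ℝ => z ^ (s - 1) * Real.exp (-z)) (Set.Ioi a) :=
  (gInt hs).mono_set (fun x hx => lt_of_le_of_lt ha hx)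

lemma lowerGamma_add {s : ℝ} (hs : 0 < s) {e x : ℝ} (he : 0 ≤ e) (hex : e ≤ x) :
    lowerGamma s x = lowerGamma s e +
      ∫ z in Set.Ioc e x, z ^ (s - 1) * Real.exp (-z) := by
  rw [lowerGamma, lowerGamma, ← setIntegral_union (Set.Ioc_disjoint_Ioc_of_le le_rfl)
    measurableSet_Ioc (gIntIoc hs le_rfl) (gIntIoc hs he),
    Set.Ioc_union_Ioc_eq_Ioc he hex]

lemma upperGamma_add {s : ℝ} (hs : 0 < s) {e x : ℝ} (he : 0 ≤ e) (hex : e ≤ x) :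
    upperGamma s e = (∫ z in Set.Ioc e x, z ^ (s - 1) * Real.exp (-z)) + upperGamma s x := by
  rw [upperGamma, upperGamma, ← setIntegral_union (Set.Ioc_disjoint_Ioi le_rfl)
    measurableSet_Ioi (gIntIoc hs he) (gIntIoi hs (he.trans hex)),
    Set.Ioc_union_Ioi_eq_Ioi hex]

lemma lowerGamma_pos {s : ℝ} (hs : 0 < s) {x : ℝ} (hx : 0 < x) : 0 < lowerGamma s x := by
  rw [lowerGamma, setIntegral_pos_iff_support_of_nonneg_ae]
  · have hsub : Set.Ioc 0 x ⊆ Function.support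
        (fun z : ℝ => z ^ (s - 1) * Real.exp (-z)) ∩ Set.Ioc 0 x := by
      intro z hz
      exact ⟨ne_of_gt (mul_pos (Real.rpow_pos_of_pos hz.1 _) (Real.exp_pos _)), hz⟩
    refine lt_of_lt_of_le ?_ (measure_mono hsub)
    simp [hx]
  · filter_upwards [ae_restrict_mem measurableSet_Ioc] with z hz
    exact le_of_lt (mul_pos (Real.rpow_pos_of_pos hz.1 _) (Real.exp_pos _))
  · exact gIntIoc hs le_rfl

lemma upperGamma_pos {s : ℝ} (hs : 0 < s) {x : ℝ} (hx : 0 ≤ x) : 0 < upperGamma s x := by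
  rw [upperGamma, setIntegral_pos_iff_support_of_nonneg_ae]
  · have hsub : Set.Ioi x ⊆ Function.support
        (fun z : ℝ => z ^ (s - 1) * Real.exp (-z)) ∩ Set.Ioi x := by
      intro z hz
      have hz0 : 0 < z := lt_of_le_of_lt hx hz
      exact ⟨ne_of_gt (mul_pos (Real.rpow_pos_of_pos hz0 _) (Real.exp_pos _)), hz⟩
    refine lt_of_lt_of_le ?_ (measure_mono hsub)
    simp
  · filter_upwards [ae_restrict_mem measurableSet_Ioi] with z hz
    exact le_of_lt (mul_pos (Real.rpow_pos_of_pos (lt_of_le_of_lt hx hz) _) (Real.exp_pos _))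
  · exact gIntIoi hs hx

noncomputable def auxFl (s x : ℝ) : ℝ :=
  ∫ t in Set.Ioc (0:ℝ) 1, t ^ (s - 1) * Real.exp (x * (1 - t))

noncomputable def auxFu (s x : ℝ) : ℝ :=
  ∫ t in Set.Ioi (1:ℝ), t ^ (s - 1) * Real.exp (x * (1 - t))

lemma gInt' {s : ℝ} (hs : 0 < s) :
    IntegrableOn (fun z : ℝ => z ^ (s - 1) * Real.exp (-z)) (Set.Ioi 0) :=
  (Real.GammaIntegral_convergent hs).congr_fun (fun _ _ => mul_comm _ _) measurableSet_Ioi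

lemma intFl {s : ℝ} (hs : 0 < s) (x : ℝ) :
    IntegrableOn (fun t : ℝ => t ^ (s - 1) * Real.exp (x * (1 - t))) (Set.Ioc 0 1) := by
  have base : IntegrableOn (fun t : ℝ => t ^ (s - 1)) (Set.Ioc 0 1) :=
    (intervalIntegrable_iff_integrableOn_Ioc_of_le zero_le_one).mp
      (intervalIntegral.intervalIntegrable_rpow' (by linarith))
  have h := MeasureTheory.Integrable.bdd_mul base (c := Real.exp |x|)
    (f := fun t : ℝ => Real.exp (x * (1 - t)))
    ((Real.continuous_exp.comp (by continuity)).aestronglyMeasurable)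
    ?_
  · exact IntegrableOn.congr_fun h (fun t _ => mul_comm _ _) measurableSet_Ioc
  · filter_upwards [ae_restrict_mem measurableSet_Ioc] with t ht
    rw [Real.norm_eq_abs, Real.abs_exp, Real.exp_le_exp]
    have h1 := le_abs_self x
    have h2 := abs_nonneg x
    nlinarith [ht.1, ht.2]

lemma intFu {s : ℝ} (hs : 0 < s) {x : ℝ} (hx : 0 < x) :
    IntegrableOn (fun t : ℝ => t ^ (s - 1) * Real.exp (x * (1 - t))) (Set.Ioi 1) := by
  have h1 : IntegrableOn (fun z : ℝ => z ^ (s - 1) * Real.exp (-z)) (Set.Ioi (x * 1)) :=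
    by rw [mul_one]; exact (gInt' hs).mono_set (Set.Ioi_subset_Ioi hx.le)
  have h2 : IntegrableOn (fun t : ℝ => (x * t) ^ (s - 1) * Real.exp (-(x * t))) (Set.Ioi 1) :=
    (integrableOn_Ioi_comp_mul_left_iff (fun z : ℝ => z ^ (s - 1) * Real.exp (-z)) 1 hx).mpr h1
  have h3 := (h2.const_mul ((x ^ (s - 1))⁻¹ * Real.exp x))
  refine IntegrableOn.congr_fun h3 (fun t ht => ?_) measurableSet_Ioi
  have ht0 : (0:ℝ) < t := lt_trans zero_lt_one ht
  have hxs : x ^ (s - 1) ≠ 0 := ne_of_gt (Real.rpow_pos_of_pos hx _)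
  show (x ^ (s-1))⁻¹ * Real.exp x * ((x * t) ^ (s - 1) * Real.exp (-(x * t))) = _
  rw [Real.mul_rpow hx.le ht0.le, show -(x*t) = -x + x*(1-t) by ring, Real.exp_add,
    Real.exp_neg]
  field_simp

lemma rpow_split {s x : ℝ} (hx : 0 < x) : x ^ s = x * x ^ (s - 1) := by
  have h := Real.rpow_add hx 1 (s - 1)
  rw [show (1:ℝ) + (s - 1) = s by ring, Real.rpow_one] at h
  exact h

lemma lowerGamma_eq {s x : ℝ} (hs : 0 < s) (hx : 0 < x) :
    lowerGamma s x = x ^ s * Real.exp (-x) * auxFl s x := by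
  have key : (∫ t in (0:ℝ)..1, (x * t) ^ (s - 1) * Real.exp (-(x * t)))
      = x⁻¹ * lowerGamma s x := by
    have h := intervalIntegral.integral_comp_mul_left
      (f := fun z : ℝ => z ^ (s - 1) * Real.exp (-z)) (a := 0) (b := 1) hx.ne'
    rw [mul_zero, mul_one, intervalIntegral.integral_of_le hx.le, smul_eq_mul] at h
    exact h
  have hL : (∫ t in (0:ℝ)..1, (x * t) ^ (s - 1) * Real.exp (-(x * t)))
      = x ^ (s - 1) * Real.exp (-x) * auxFl s x := by
    rw [intervalIntegral.integral_of_le zero_le_one, auxFl, ← MeasureTheory.integral_const_mul]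
    refine setIntegral_congr_fun measurableSet_Ioc (fun t ht => ?_)
    rw [Real.mul_rpow hx.le ht.1.le, show -(x*t) = -x + x*(1-t) by ring, Real.exp_add]
    ring
  have : x⁻¹ * lowerGamma s x = x ^ (s - 1) * Real.exp (-x) * auxFl s x := by
    rw [← key, hL]
  rw [rpow_split hx]
  field_simp at this ⊢
  linarith [this]

lemma upperGamma_eq {s x : ℝ} (hs : 0 < s) (hx : 0 < x) :
    upperGamma s x = x ^ s * Real.exp (-x) * auxFu s x := by
  have key : (∫ t in Set.Ioi (1:ℝ), (x * t) ^ (s - 1) * Real.exp (-(x * t)))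
      = x⁻¹ * upperGamma s x := by
    have h := integral_comp_mul_left_Ioi
      (fun z : ℝ => z ^ (s - 1) * Real.exp (-z)) 1 hx
    rw [mul_one, smul_eq_mul] at h
    exact h
  have hL : (∫ t in Set.Ioi (1:ℝ), (x * t) ^ (s - 1) * Real.exp (-(x * t)))
      = x ^ (s - 1) * Real.exp (-x) * auxFu s x := by
    rw [auxFu, ← MeasureTheory.integral_const_mul]
    refine setIntegral_congr_fun measurableSet_Ioi (fun t ht => ?_)
    have ht0 : (0:ℝ) < t := lt_trans zero_lt_one ht
    rw [Real.mul_rpow hx.le ht0.le, show -(x*t) = -x + x*(1-t) by ring, Real.exp_add]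
    ring
  have heq : x⁻¹ * upperGamma s x = x ^ (s - 1) * Real.exp (-x) * auxFu s x := by
    rw [← key, hL]
  rw [rpow_split hx]
  field_simp at heq ⊢
  linarith [heq]

lemma auxFl_mono {s : ℝ} (hs : 0 < s) {x y : ℝ} (hxy : x ≤ y) : auxFl s x ≤ auxFl s y := by
  refine setIntegral_mono_on (intFl hs x) (intFl hs y) measurableSet_Ioc (fun t ht => ?_)
  have h1 : x * (1 - t) ≤ y * (1 - t) :=
    mul_le_mul_of_nonneg_right hxy (by linarith [ht.2])
  exact mul_le_mul_of_nonneg_left (Real.exp_le_exp.2 h1) (Real.rpow_nonneg ht.1.le _)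

lemma auxFu_anti {s : ℝ} (hs : 0 < s) {x y : ℝ} (hx : 0 < x) (hxy : x ≤ y) :
    auxFu s y ≤ auxFu s x := by
  refine setIntegral_mono_on (intFu hs (hx.trans_le hxy)) (intFu hs hx)
    measurableSet_Ioi (fun t ht => ?_)
  have h1 : y * (1 - t) ≤ x * (1 - t) :=
    mul_le_mul_of_nonpos_right hxy (by simp at ht; linarith)
  have ht0 : (0:ℝ) < t := lt_trans zero_lt_one ht
  exact mul_le_mul_of_nonneg_left (Real.exp_le_exp.2 h1) (Real.rpow_nonneg ht0.le _)

lemma int_t_pow {s : ℝ} (hs : 0 < s) : (∫ t in Set.Ioc (0:ℝ) 1, t ^ (s - 1)) = 1 / s := by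
  rw [← intervalIntegral.integral_of_le zero_le_one,
    integral_rpow (Or.inl (by linarith)), show s - 1 + 1 = s by ring,
    Real.one_rpow, Real.zero_rpow hs.ne']
  norm_num

lemma intPow {s : ℝ} (hs : 0 < s) :
    IntegrableOn (fun t : ℝ => t ^ (s - 1)) (Set.Ioc 0 1) :=
  (intervalIntegrable_iff_integrableOn_Ioc_of_le zero_le_one).mp
    (intervalIntegral.intervalIntegrable_rpow' (by linarith))

lemma auxFl_lower {s : ℝ} (hs : 0 < s) {x : ℝ} (hx : 0 ≤ x) : 1 / s ≤ auxFl s x := by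
  rw [← int_t_pow hs]
  refine setIntegral_mono_on (intPow hs) (intFl hs x) measurableSet_Ioc (fun t ht => ?_)
  have h1 : (0:ℝ) ≤ x * (1 - t) := mul_nonneg hx (by linarith [ht.2])
  calc t ^ (s - 1) = t ^ (s - 1) * 1 := by ring
    _ ≤ _ := mul_le_mul_of_nonneg_left
        (by nlinarith [Real.add_one_le_exp (x * (1 - t))])
        (Real.rpow_nonneg ht.1.le _)

lemma auxFl_upper {s : ℝ} (hs : 0 < s) {x : ℝ} (hx : 0 ≤ x) :
    auxFl s x ≤ Real.exp x * (1 / s) := by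
  have h2 : (∫ t in Set.Ioc (0:ℝ) 1, t ^ (s - 1) * Real.exp x) = Real.exp x * (1 / s) := by
    rw [← int_t_pow hs, ← MeasureTheory.integral_const_mul]
    refine setIntegral_congr_fun measurableSet_Ioc (fun t _ => ?_)
    ring
  rw [← h2]
  refine setIntegral_mono_on (intFl hs x) ((intPow hs).mul_const _) measurableSet_Ioc
    (fun t ht => ?_)
  have h1 : x * (1 - t) ≤ x := by nlinarith [ht.1, ht.2]
  exact mul_le_mul_of_nonneg_left (Real.exp_le_exp.2 h1) (Real.rpow_nonneg ht.1.le _)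

lemma auxFu_nonneg (s x : ℝ) : 0 ≤ auxFu s x := by
  refine setIntegral_nonneg measurableSet_Ioi (fun t ht => ?_)
  have ht0 : (0:ℝ) < t := lt_trans zero_lt_one ht
  positivity

lemma int_exp_shift {a : ℝ} (ha : 0 < a) :
    (∫ t in Set.Ioi (1:ℝ), Real.exp (-(a * (t - 1)))) = 1 / a := by
  have h := integral_comp_mul_left_Ioi (fun z : ℝ => Real.exp (-z)) 1 ha
  rw [mul_one, smul_eq_mul, integral_exp_neg_Ioi] at h
  have h2 : (∫ t in Set.Ioi (1:ℝ), Real.exp (-(a * (t - 1))))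
      = Real.exp a * ∫ t in Set.Ioi (1:ℝ), Real.exp (-(a * t)) := by
    rw [← MeasureTheory.integral_const_mul]
    refine setIntegral_congr_fun measurableSet_Ioi (fun t _ => ?_)
    rw [← Real.exp_add]
    ring_nf
  rw [h2, h, Real.exp_neg]
  field_simp

lemma intExpShift {a : ℝ} (ha : 0 < a) :
    IntegrableOn (fun t : ℝ => Real.exp (-(a * (t - 1)))) (Set.Ioi 1) := by
  have h := (exp_neg_integrableOn_Ioi 1 ha).const_mul (Real.exp a)
  refine IntegrableOn.congr_fun h (fun t _ => ?_) measurableSet_Ioi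
  rw [← Real.exp_add]
  ring_nf

lemma auxFu_upper {s : ℝ} (hs : 0 < s) {x : ℝ} (hx : |s - 1| + 1 ≤ x) :
    auxFu s x ≤ 1 / (x - |s - 1|) := by
  set c := |s - 1| with hc
  have hc0 : 0 ≤ c := abs_nonneg _
  have hxc : 0 < x - c := by linarith
  have hx0 : 0 < x := by linarith
  rw [← int_exp_shift hxc]
  refine setIntegral_mono_on (intFu hs hx0) (intExpShift hxc) measurableSet_Ioi
    (fun t ht => ?_)
  have ht1 : (1:ℝ) < t := ht
  have ht0 : (0:ℝ) < t := lt_trans zero_lt_one ht1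
  rw [Real.rpow_def_of_pos ht0, ← Real.exp_add, Real.exp_le_exp]
  have hlog1 : Real.log t ≤ t - 1 := by
    have := Real.add_one_le_exp (Real.log t)
    nlinarith [Real.exp_log ht0]
  have hlog0 : 0 ≤ Real.log t := Real.log_nonneg ht1.le
  have h1 : (s - 1) * Real.log t ≤ c * (t - 1) :=
    le_trans (mul_le_mul_of_nonneg_right (le_abs_self _) hlog0)
      (mul_le_mul_of_nonneg_left hlog1 hc0)
  nlinarith

lemma rpow_pow {d : ℕ} {r : ℝ} (hr : 0 < r) :
    (4 * Real.pi ^ 2 * r ^ 2) ^ ((d:ℝ)/2) = (2 * Real.pi * r) ^ d := by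
  have ha : (0:ℝ) < 2 * Real.pi * r := by positivity
  have h4 : 4 * Real.pi ^ 2 * r ^ 2 = (2*Real.pi*r)^2 := by ring
  rw [h4, ← Real.rpow_natCast (2*Real.pi*r) 2, ← Real.rpow_mul ha.le,
    ← Real.rpow_natCast (2*Real.pi*r) d]
  congr 1
  push_cast
  ring

/-- The step weight: `q(r) = -α` for `r ≤ ε` and `q(r) = αβ` for `r > ε`, with
`β = γ(d/2, 4π²ε²)/Γ(d/2, 4π²ε²)`. -/
noncomputable def stepQ (α ε : ℝ) (d : ℕ) (r : ℝ) : ℝ :=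
  if r ≤ ε then -α
  else α * (lowerGamma ((d : ℝ) / 2) (4 * Real.pi ^ 2 * ε ^ 2) /
    upperGamma ((d : ℝ) / 2) (4 * Real.pi ^ 2 * ε ^ 2))

/-- The associated kernel frequency
`k̂(r) = -(2πr)^{-d} e^{4π²r²} ∫₀^{4π²r²} q(√u/(2π)) u^{d/2-1} e^{-u} du`. -/
noncomputable def stepKhat (α ε : ℝ) (d : ℕ) (r : ℝ) : ℝ :=
  -(1 / (2 * Real.pi * r) ^ d) * Real.exp (4 * Real.pi ^ 2 * r ^ 2) *
    ∫ u in Set.Ioc (0:ℝ) (4 * Real.pi ^ 2 * r ^ 2),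
      stepQ α ε d (Real.sqrt u / (2 * Real.pi)) * u ^ ((d : ℝ) / 2 - 1) * Real.exp (-u)


section StepLemmas

variable {d : ℕ} {α ε : ℝ}

lemma hQ_eq (hε : 0 < ε) {u : ℝ} (hu : 0 < u) :
    stepQ α ε d (Real.sqrt u / (2 * Real.pi)) =
      if u ≤ 4 * Real.pi ^ 2 * ε ^ 2 then -α
      else α * (lowerGamma ((d : ℝ) / 2) (4 * Real.pi ^ 2 * ε ^ 2) /
        upperGamma ((d : ℝ) / 2) (4 * Real.pi ^ 2 * ε ^ 2)) := by
  have hπ := Real.pi_pos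
  have hiff : (Real.sqrt u / (2 * Real.pi) ≤ ε) ↔ (u ≤ 4 * Real.pi ^ 2 * ε ^ 2) := by
    rw [div_le_iff₀ (by positivity), Real.sqrt_le_left (by positivity),
      show (ε * (2 * Real.pi)) ^ 2 = 4 * Real.pi ^ 2 * ε ^ 2 by ring]
  rw [stepQ, if_congr hiff rfl rfl]

end StepLemmas


/-- For the step weight `q`, the full integral `∫₀^∞ q(√u/(2π)) u^{d/2-1} e^{-u} du`
vanishes; the kernel frequency `k̂` is strictly positive, given piecewise by
`α e^{4π²r²}(2πr)^{-d} γ(d/2,4π²r²)` for `r ≤ ε` and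
`αβ e^{4π²r²}(2πr)^{-d} Γ(d/2,4π²r²)` for `r > ε`, increasing on `(0,ε]`, decreasing
on `[ε,∞)`, with `k̂(0⁺) = 2α/d` and `k̂(r) → 0` as `r → ∞`. -/
theorem stmt18 (d : ℕ) (hd : 1 ≤ d) (α ε : ℝ) (hα : 0 < α) (hε : 0 < ε) :
    (∫ u in Set.Ioi (0:ℝ),
        stepQ α ε d (Real.sqrt u / (2 * Real.pi)) * u ^ ((d : ℝ) / 2 - 1) * Real.exp (-u)) = 0 ∧
    (∀ r > (0:ℝ), 0 < stepKhat α ε d r) ∧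
    (∀ r > (0:ℝ), r ≤ ε → stepKhat α ε d r =
      α * Real.exp (4 * Real.pi ^ 2 * r ^ 2) / (2 * Real.pi * r) ^ d *
        lowerGamma ((d : ℝ) / 2) (4 * Real.pi ^ 2 * r ^ 2)) ∧
    (∀ r > ε, stepKhat α ε d r =
      α * (lowerGamma ((d : ℝ) / 2) (4 * Real.pi ^ 2 * ε ^ 2) /
          upperGamma ((d : ℝ) / 2) (4 * Real.pi ^ 2 * ε ^ 2)) *
        Real.exp (4 * Real.pi ^ 2 * r ^ 2) / (2 * Real.pi * r) ^ d *
        upperGamma ((d : ℝ) / 2) (4 * Real.pi ^ 2 * r ^ 2)) ∧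
    MonotoneOn (stepKhat α ε d) (Set.Ioc 0 ε) ∧
    AntitoneOn (stepKhat α ε d) (Set.Ici ε) ∧
    Filter.Tendsto (stepKhat α ε d) (nhdsWithin 0 (Set.Ioi 0)) (nhds (2 * α / d)) ∧
    Filter.Tendsto (stepKhat α ε d) Filter.atTop (nhds 0) := by
  have hπ : 0 < Real.pi := Real.pi_pos
  have hd0 : (0:ℝ) < (d:ℝ) := by exact_mod_cast Nat.lt_of_lt_of_le Nat.zero_lt_one hd
  set s : ℝ := (d:ℝ) / 2 with hsdef
  have hs : 0 < s := by positivity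
  set E : ℝ := 4 * Real.pi ^ 2 * ε ^ 2 with hEdef
  have hE0 : 0 < E := by positivity
  set A : ℝ := α * (lowerGamma s E / upperGamma s E) with hAdef
  have hlE : 0 < lowerGamma s E := lowerGamma_pos hs hE0
  have huE : 0 < upperGamma s E := upperGamma_pos hs hE0.le
  have hA0 : 0 < A := by
    rw [hAdef]; exact mul_pos hα (div_pos hlE huE)
  have hAeq : A * upperGamma s E = α * lowerGamma s E := by
    rw [hAdef]; field_simp
  have hQ : ∀ u : ℝ, 0 < u →
      stepQ α ε d (Real.sqrt u / (2 * Real.pi)) = if u ≤ E then -α else A :=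
    fun u hu => hQ_eq hε hu
  -- the set-integral of the step integrand over various regions
  have hIlowInt : ∀ b : ℝ, IntegrableOn (fun u : ℝ =>
      stepQ α ε d (Real.sqrt u / (2 * Real.pi)) * u ^ (s - 1) * Real.exp (-u))
      (Set.Ioc 0 (min b E)) := by
    intro b
    refine IntegrableOn.congr_fun (((gIntIoc hs le_rfl).const_mul (-α)))
      (fun u hu => ?_) measurableSet_Ioc
    rw [hQ u hu.1, if_pos (hu.2.trans (min_le_right _ _))]
    ring
  have hIhighInt : ∀ a b : ℝ, E ≤ a → IntegrableOn (fun u : ℝ =>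
      stepQ α ε d (Real.sqrt u / (2 * Real.pi)) * u ^ (s - 1) * Real.exp (-u))
      (Set.Ioc a b) := by
    intro a b ha
    refine IntegrableOn.congr_fun (((gIntIoc hs (hE0.le.trans ha)).const_mul A))
      (fun u hu => ?_) measurableSet_Ioc
    rw [hQ u (hE0.trans_le (ha.trans hu.1.le)), if_neg (not_le.2 (ha.trans_lt hu.1))]
    ring
  have hIoiInt : IntegrableOn (fun u : ℝ =>
      stepQ α ε d (Real.sqrt u / (2 * Real.pi)) * u ^ (s - 1) * Real.exp (-u))
      (Set.Ioi E) := by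
    refine IntegrableOn.congr_fun (((gIntIoi hs hE0.le).const_mul A))
      (fun u hu => ?_) measurableSet_Ioi
    rw [hQ u (hE0.trans hu), if_neg (not_le.2 hu)]
    ring
  have hvalLow : ∀ X : ℝ, X ≤ E → (∫ u in Set.Ioc (0:ℝ) X,
      stepQ α ε d (Real.sqrt u / (2 * Real.pi)) * u ^ (s - 1) * Real.exp (-u))
      = -α * lowerGamma s X := by
    intro X hXE
    rw [lowerGamma, ← MeasureTheory.integral_const_mul]
    refine setIntegral_congr_fun measurableSet_Ioc (fun u hu => ?_)
    rw [hQ u hu.1, if_pos (hu.2.trans hXE)]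
    ring
  have hvalMid : ∀ X : ℝ, E ≤ X → (∫ u in Set.Ioc E X,
      stepQ α ε d (Real.sqrt u / (2 * Real.pi)) * u ^ (s - 1) * Real.exp (-u))
      = A * (lowerGamma s X - lowerGamma s E) := by
    intro X hEX
    have hsplit := lowerGamma_add hs hE0.le hEX
    have : lowerGamma s X - lowerGamma s E
        = ∫ z in Set.Ioc E X, z ^ (s - 1) * Real.exp (-z) := by linarith
    rw [this, ← MeasureTheory.integral_const_mul]
    refine setIntegral_congr_fun measurableSet_Ioc (fun u hu => ?_)
    rw [hQ u (hE0.trans hu.1), if_neg (not_le.2 hu.1)]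
    ring
  have hvalIoi : (∫ u in Set.Ioi E,
      stepQ α ε d (Real.sqrt u / (2 * Real.pi)) * u ^ (s - 1) * Real.exp (-u))
      = A * upperGamma s E := by
    rw [upperGamma, ← MeasureTheory.integral_const_mul]
    refine setIntegral_congr_fun measurableSet_Ioi (fun u hu => ?_)
    rw [hQ u (hE0.trans hu), if_neg (not_le.2 hu)]
    ring
  -- Part 1 : total integral vanishes
  have part1 : (∫ u in Set.Ioi (0:ℝ),
      stepQ α ε d (Real.sqrt u / (2 * Real.pi)) * u ^ (s - 1) * Real.exp (-u)) = 0 := by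
    rw [← Set.Ioc_union_Ioi_eq_Ioi hE0.le,
      setIntegral_union (Set.Ioc_disjoint_Ioi le_rfl) measurableSet_Ioi
        (by simpa [min_eq_left (le_refl E)] using hIlowInt E) hIoiInt,
      hvalLow E le_rfl, hvalIoi, hAeq]
    ring
  -- Piecewise formulas
  have hX0 : ∀ r : ℝ, 0 < r → (0:ℝ) < 4 * Real.pi ^ 2 * r ^ 2 := fun r hr => by positivity
  have hXmono : ∀ a b : ℝ, 0 ≤ a → a ≤ b →
      4 * Real.pi ^ 2 * a ^ 2 ≤ 4 * Real.pi ^ 2 * b ^ 2 := by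
    intro a b ha hab
    have h2 : a ^ 2 ≤ b ^ 2 := by nlinarith
    have h3 : (0:ℝ) ≤ 4 * Real.pi ^ 2 := by positivity
    nlinarith
  have hV1 : ∀ r : ℝ, 0 < r → r ≤ ε → stepKhat α ε d r =
      α * Real.exp (4 * Real.pi ^ 2 * r ^ 2) / (2 * Real.pi * r) ^ d *
        lowerGamma s (4 * Real.pi ^ 2 * r ^ 2) := by
    intro r hr hrε
    rw [stepKhat, hvalLow _ (hXmono r ε hr.le hrε)]
    ring
  have hV2 : ∀ r : ℝ, ε < r → stepKhat α ε d r =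
      A * Real.exp (4 * Real.pi ^ 2 * r ^ 2) / (2 * Real.pi * r) ^ d *
        upperGamma s (4 * Real.pi ^ 2 * r ^ 2) := by
    intro r hrε
    have hr : 0 < r := hε.trans hrε
    have hEX : E ≤ 4 * Real.pi ^ 2 * r ^ 2 := hXmono ε r hε.le hrε.le
    rw [stepKhat, ← Set.Ioc_union_Ioc_eq_Ioc hE0.le hEX,
      setIntegral_union (Set.Ioc_disjoint_Ioc_of_le le_rfl) measurableSet_Ioc
        (by simpa [min_eq_left (le_refl E)] using hIlowInt E) (hIhighInt E _ le_rfl),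
      hvalLow E le_rfl, hvalMid _ hEX]
    have hdiff : lowerGamma s (4 * Real.pi ^ 2 * r ^ 2) - lowerGamma s E
        = upperGamma s E - upperGamma s (4 * Real.pi ^ 2 * r ^ 2) := by
      have h1 := lowerGamma_add hs hE0.le hEX
      have h2 := upperGamma_add hs hE0.le hEX
      linarith
    rw [hdiff]
    have : -α * lowerGamma s E +
        A * (upperGamma s E - upperGamma s (4 * Real.pi ^ 2 * r ^ 2))
        = -(A * upperGamma s (4 * Real.pi ^ 2 * r ^ 2)) := by
      rw [mul_sub]
      linarith [hAeq]
    rw [this]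
    ring
  -- k̂ in terms of auxFl / auxFu
  have hkFl : ∀ r : ℝ, 0 < r → r ≤ ε →
      stepKhat α ε d r = α * auxFl s (4 * Real.pi ^ 2 * r ^ 2) := by
    intro r hr hrε
    have hX := hX0 r hr
    have hP : (0:ℝ) < (2 * Real.pi * r) ^ d := by positivity
    rw [hV1 r hr hrε, lowerGamma_eq hs hX, rpow_pow hr, Real.exp_neg]
    field_simp
  have hbridge : α * auxFl s E = A * auxFu s E := by
    have h1 := lowerGamma_eq hs hE0
    have h2 := upperGamma_eq hs hE0
    have hK : E ^ s * Real.exp (-E) ≠ 0 := by positivity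
    refine mul_right_cancel₀ hK ?_
    have e1 : α * auxFl s E * (E ^ s * Real.exp (-E)) = α * lowerGamma s E := by
      rw [h1]; ring
    have e2 : A * auxFu s E * (E ^ s * Real.exp (-E)) = A * upperGamma s E := by
      rw [h2]; ring
    rw [e1, e2, hAeq]
  have hkFu : ∀ r : ℝ, ε ≤ r →
      stepKhat α ε d r = A * auxFu s (4 * Real.pi ^ 2 * r ^ 2) := by
    intro r hrε
    have hr : 0 < r := hε.trans_le hrε
    rcases eq_or_lt_of_le hrε with heq | hlt
    · rw [← heq, hkFl ε hε le_rfl, ← hEdef, hbridge]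
    · have hX := hX0 r hr
      have hP : (0:ℝ) < (2 * Real.pi * r) ^ d := by positivity
      rw [hV2 r hlt, upperGamma_eq hs hX, rpow_pow hr, Real.exp_neg]
      field_simp
  refine ⟨part1, ?_, fun r hr hrε => hV1 r hr hrε, fun r hr => hV2 r hr, ?_, ?_, ?_, ?_⟩
  -- positivity
  · intro r hr
    rcases le_or_gt r ε with hle | hlt
    · rw [hkFl r hr hle]
      refine mul_pos hα (lt_of_lt_of_le (by positivity) (auxFl_lower hs (hX0 r hr).le))
    · rw [hV2 r hlt]
      have hP : (0:ℝ) < (2 * Real.pi * r) ^ d := by positivity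
      exact mul_pos (div_pos (mul_pos hA0 (Real.exp_pos _)) hP)
        (upperGamma_pos hs (hX0 r hr).le)
  -- monotone on Ioc 0 ε
  · intro a ha b hb hab
    rw [hkFl a ha.1 ha.2, hkFl b hb.1 hb.2]
    exact mul_le_mul_of_nonneg_left (auxFl_mono hs (hXmono a b ha.1.le hab)) hα.le
  -- antitone on Ici ε
  · intro a ha b hb hab
    rw [hkFu a ha, hkFu b hb]
    have ha0 : 0 < a := hε.trans_le ha
    exact mul_le_mul_of_nonneg_left
      (auxFu_anti hs (hX0 a ha0) (hXmono a b ha0.le hab)) hA0.le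
  -- limit at 0+
  · have hmem : Set.Ioc (0:ℝ) ε ∈ nhdsWithin 0 (Set.Ioi 0) :=
      Ioc_mem_nhdsGT_of_mem ⟨le_refl 0, hε⟩
    have htX : Filter.Tendsto (fun r : ℝ => 4 * Real.pi ^ 2 * r ^ 2)
        (nhdsWithin 0 (Set.Ioi 0)) (nhds 0) := by
      have hc : Continuous (fun r : ℝ => 4 * Real.pi ^ 2 * r ^ 2) := continuous_const.mul (continuous_pow 2)
      have h0 := (hc.tendsto 0).mono_left
        (nhdsWithin_le_nhds (s := Set.Ioi (0:ℝ)))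
      simpa using h0
    have hupper : Filter.Tendsto (fun r : ℝ => α * (Real.exp (4 * Real.pi ^ 2 * r ^ 2) * (1 / s)))
        (nhdsWithin 0 (Set.Ioi 0)) (nhds (2 * α / d)) := by
      have h1 := (Real.continuous_exp.tendsto 0).comp htX
      have h2 := (h1.mul_const (1 / s)).const_mul α
      have : α * (Real.exp 0 * (1 / s)) = 2 * α / d := by
        rw [Real.exp_zero, hsdef]
        field_simp
      rwa [this] at h2
    refine tendsto_of_tendsto_of_tendsto_of_le_of_le' tendsto_const_nhds hupper ?_ ?_
    · filter_upwards [hmem] with r hr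
      rw [hkFl r hr.1 hr.2]
      have := auxFl_lower hs (hX0 r hr.1).le
      have h2αd : 2 * α / (d:ℝ) = α * (1 / s) := by
        rw [hsdef]; field_simp
      rw [h2αd]
      exact mul_le_mul_of_nonneg_left this hα.le
    · filter_upwards [hmem] with r hr
      rw [hkFl r hr.1 hr.2]
      exact mul_le_mul_of_nonneg_left (auxFl_upper hs (hX0 r hr.1).le) hα.le
  -- limit at infinity
  · have htX : Filter.Tendsto (fun r : ℝ => 4 * Real.pi ^ 2 * r ^ 2)
        Filter.atTop Filter.atTop := by
      apply Filter.Tendsto.const_mul_atTop (by positivity : (0:ℝ) < 4 * Real.pi ^ 2)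
      exact Filter.tendsto_pow_atTop (by norm_num)
    set c : ℝ := |s - 1| with hcdef
    have hc0 : 0 ≤ c := abs_nonneg _
    have hmem : ∀ᶠ r : ℝ in Filter.atTop,
        ε ≤ r ∧ c + 1 ≤ 4 * Real.pi ^ 2 * r ^ 2 :=
      (Filter.eventually_ge_atTop ε).and (htX.eventually_ge_atTop (c + 1))
    have htail : Filter.Tendsto (fun r : ℝ => A * (1 / (4 * Real.pi ^ 2 * r ^ 2 - c)))
        Filter.atTop (nhds 0) := by
      have h1 : Filter.Tendsto (fun r : ℝ => 4 * Real.pi ^ 2 * r ^ 2 - c)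
          Filter.atTop Filter.atTop := htX.atTop_add tendsto_const_nhds
      have h2 := h1.inv_tendsto_atTop
      have h3 := h2.const_mul A
      simpa [one_div] using h3
    refine tendsto_of_tendsto_of_tendsto_of_le_of_le' tendsto_const_nhds htail ?_ ?_
    · filter_upwards [hmem] with r hr
      rw [hkFu r hr.1]
      exact mul_nonneg hA0.le (auxFu_nonneg _ _)
    · filter_upwards [hmem] with r hr
      rw [hkFu r hr.1]
      exact mul_le_mul_of_nonneg_left (auxFu_upper hs hr.2) hA0.le
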